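/- arXiv:1811.05864 — 3 statements merged into one kernel-verified Lean document; each statement's English description precedes it below -/
import Mathlib

section
/- The marginal caching value m^c_i(X) = G(X|x^c_i=1) - G(X|x^c_i=0) factors as λ^c_i · w̄^c_i, where λ^c_i = Σ_{(c,p)∈R^c_i} λ_{(c,p)} · Π_{k'=1}^{i'-1}(1 - x^c_{p_{k'}}) is the effective arrival rate of requests for c reaching node i, and w̄^c_i is the corresponding arrival-rate-weighted average of the upstream costs w_{(c,p)} = w_{p_{i'+1}p_{i'}} + Σ_{k=i'+1}^{K-1} w_{p_{k+1}p_k} · Π_{k'=i'+1}^{k}(1-x^c_{p_{k'}}), provided λ^c_i > 0. -/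
open Finset

/-- Caching gain `G(X)`. -/
noncomputable def cachingGain {C N R : Type*} [Fintype R] (K : R → ℕ) (cont : R → C)
    (path : R → ℕ → N) (lam : R → ℝ) (w : R → ℕ → ℝ) (x : C → N → ℝ) : ℝ :=
  ∑ r, lam r * ∑ k ∈ Finset.Icc 1 (K r - 1),
    w r k * (1 - ∏ k' ∈ Finset.Icc 1 k, (1 - x (cont r) (path r k')))

/-- `X` with entry `(c,i)` set to `b`. -/
def setEntry {C N : Type*} [DecidableEq C] [DecidableEq N]
    (x : C → N → ℝ) (c : C) (i : N) (b : ℝ) : C → N → ℝ :=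
  fun c' j => if c' = c ∧ j = i then b else x c' j

/-- Splitting a sum over `Icc 1 k` at a position `p` with `1 ≤ p ≤ k`. -/
theorem sum_split_aux (p k : ℕ) (hp : 1 ≤ p) (f : ℕ → ℝ) (hpk : p ≤ k) :
    ∑ j ∈ Finset.Icc 1 k, f j
      = ∑ j ∈ Finset.Icc 1 (p-1), f j + (f p + ∑ j ∈ Finset.Icc (p+1) k, f j) := by
  rw [show Finset.Icc 1 k = Finset.Ioc 0 k from Finset.Icc_add_one_left_eq_Ioc 0 k,
    ← Finset.sum_Ioc_consecutive _ (Nat.zero_le (p-1)) (by omega : p - 1 ≤ k)]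
  congr 1
  rw [show Finset.Ioc (p-1) k = Finset.Icc p k by rw [← Finset.Icc_add_one_left_eq_Ioc]; congr 1; omega,
    Finset.Icc_eq_cons_Ioc hpk, Finset.sum_cons,
    show Finset.Ioc p k = Finset.Icc (p+1) k from (Finset.Icc_add_one_left_eq_Ioc p k).symm]

/-- Splitting a product over `Icc 1 k` at a position `p` with `1 ≤ p ≤ k`. -/
theorem prod_split_aux (p k : ℕ) (hp : 1 ≤ p) (f : ℕ → ℝ) (hpk : p ≤ k) :
    ∏ j ∈ Finset.Icc 1 k, f j
      = (∏ j ∈ Finset.Icc 1 (p-1), f j) * (f p * ∏ j ∈ Finset.Icc (p+1) k, f j) := by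
  rw [show Finset.Icc 1 k = Finset.Ioc 0 k from Finset.Icc_add_one_left_eq_Ioc 0 k,
    ← Finset.prod_Ioc_consecutive _ (Nat.zero_le (p-1)) (by omega : p - 1 ≤ k)]
  congr 1
  rw [show Finset.Ioc (p-1) k = Finset.Icc p k by rw [← Finset.Icc_add_one_left_eq_Ioc]; congr 1; omega,
    Finset.Icc_eq_cons_Ioc hpk, Finset.prod_cons,
    show Finset.Ioc p k = Finset.Icc (p+1) k from (Finset.Icc_add_one_left_eq_Ioc p k).symm]

/-- The marginal value `m^c_i(X)` of caching content `c` at node `i` factors as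
`λ^c_i ⬝ w̄^c_i`, the effective arrival rate at `i` times the arrival-rate-weighted
average upstream cost, provided `λ^c_i > 0`. -/
theorem stmt_0 {C N R : Type*} [DecidableEq C] [DecidableEq N] [Fintype R]
    (K : R → ℕ) (cont : R → C) (path : R → ℕ → N) (lam : R → ℝ) (w : R → ℕ → ℝ)
    (hlam : ∀ r, 0 ≤ lam r) (hw : ∀ r k, 0 ≤ w r k)
    (x : C → N → ℝ) (hx : ∀ c' j, x c' j = 0 ∨ x c' j = 1)
    (c : C) (i : N)
    -- `Rci` is the set of requests for content `c` whose path passes through `i`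
    (Rci : Finset R)
    (hRci : ∀ r, r ∈ Rci ↔ cont r = c ∧ ∃ k ∈ Finset.Icc 1 (K r), path r k = i)
    -- `pos r = i'` is the (unique, since paths are simple) position of `i` on the
    -- path of `r`; `i` is an intermediate node, not the source
    (pos : R → ℕ)
    (hpos : ∀ r ∈ Rci, pos r ∈ Finset.Icc 1 (K r - 1) ∧ path r (pos r) = i)
    (hsimple : ∀ r ∈ Rci, ∀ k ∈ Finset.Icc 1 (K r), path r k = i → k = pos r)
    -- effective arrival rate of requests `(c,p)` reaching node `i`
    (lamEff : R → ℝ)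
    (hlamEff : ∀ r, lamEff r =
      lam r * ∏ k' ∈ Finset.Icc 1 (pos r - 1), (1 - x c (path r k')))
    -- per-request upstream cost of a miss at `i` along the path of `r`
    (wReq : R → ℝ)
    (hwReq : ∀ r, wReq r = w r (pos r) +
      ∑ k ∈ Finset.Icc (pos r + 1) (K r - 1),
        w r k * ∏ k' ∈ Finset.Icc (pos r + 1) k, (1 - x c (path r k')))
    (lamci : ℝ) (hlamci : lamci = ∑ r ∈ Rci, lamEff r)
    (wbar : ℝ) (hwbar : wbar = (∑ r ∈ Rci, lamEff r * wReq r) / lamci)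
    (hpositive : 0 < lamci) :
    cachingGain K cont path lam w (setEntry x c i 1) -
      cachingGain K cont path lam w (setEntry x c i 0) = lamci * wbar := by
  have hlamne : lamci ≠ 0 := ne_of_gt hpositive
  have hRHS : lamci * wbar = ∑ r ∈ Rci, lamEff r * wReq r := by
    rw [hwbar]; field_simp
  rw [hRHS]
  unfold cachingGain
  rw [← Finset.sum_sub_distrib]
  rw [← Finset.sum_subset (Finset.subset_univ Rci) ?vanish]
  case vanish =>
    intro r _ hr
    have hval : ∀ (b : ℝ) (k' : ℕ), k' ∈ Finset.Icc 1 (K r) →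
        setEntry x c i b (cont r) (path r k') = x (cont r) (path r k') := by
      intro b k' hk'
      unfold setEntry
      split_ifs with h
      · exact absurd ((hRci r).2 ⟨h.1, k', hk', h.2⟩) hr
      · rfl
    have hsum : ∀ b : ℝ, ∑ k ∈ Finset.Icc 1 (K r - 1),
        w r k * (1 - ∏ k' ∈ Finset.Icc 1 k, (1 - setEntry x c i b (cont r) (path r k')))
        = ∑ k ∈ Finset.Icc 1 (K r - 1),
        w r k * (1 - ∏ k' ∈ Finset.Icc 1 k, (1 - x (cont r) (path r k'))) := by
      intro b
      refine Finset.sum_congr rfl fun k hk => ?_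
      rw [Finset.mem_Icc] at hk
      congr 1
      congr 1
      refine Finset.prod_congr rfl fun k' hk' => ?_
      rw [Finset.mem_Icc] at hk'
      rw [hval b k' (Finset.mem_Icc.2 ⟨hk'.1, by omega⟩)]
    rw [hsum 1, hsum 0, sub_self]
  refine Finset.sum_congr rfl fun r hr => ?_
  obtain ⟨hc, -⟩ := (hRci r).1 hr
  obtain ⟨hpm, hpi⟩ := hpos r hr
  rw [Finset.mem_Icc] at hpm
  obtain ⟨hp1, hp2⟩ := hpm
  -- values of setEntry along the path
  have hvalne : ∀ (b : ℝ) (k' : ℕ), 1 ≤ k' → k' ≤ K r - 1 → k' ≠ pos r →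
      setEntry x c i b (cont r) (path r k') = x c (path r k') := by
    intro b k' h1 h2 hne
    unfold setEntry
    split_ifs with h
    · exact absurd (hsimple r hr k' (Finset.mem_Icc.2 ⟨h1, by omega⟩) h.2) hne
    · rw [hc]
  have hvalp : ∀ b : ℝ, setEntry x c i b (cont r) (path r (pos r)) = b := by
    intro b; unfold setEntry; rw [if_pos ⟨hc, hpi⟩]
  set A := ∏ k' ∈ Finset.Icc 1 (pos r - 1), (1 - x c (path r k')) with hA
  set B : ℕ → ℝ := fun k => ∏ k' ∈ Finset.Icc (pos r + 1) k, (1 - x c (path r k')) with hB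
  have e1 : ∀ b : ℝ,
      ∏ k' ∈ Finset.Icc 1 (pos r - 1), (1 - setEntry x c i b (cont r) (path r k')) = A := by
    intro b
    refine Finset.prod_congr rfl fun k' hk' => ?_
    rw [Finset.mem_Icc] at hk'
    rw [hvalne b k' hk'.1 (by omega) (by omega)]
  have e2 : ∀ (b : ℝ) (k : ℕ), k ≤ K r - 1 →
      ∏ k' ∈ Finset.Icc (pos r + 1) k, (1 - setEntry x c i b (cont r) (path r k')) = B k := by
    intro b k hk
    refine Finset.prod_congr rfl fun k' hk' => ?_
    rw [Finset.mem_Icc] at hk'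
    rw [hvalne b k' (by omega) (by omega) (by omega)]
  -- the inner sum, in closed form
  have hS : ∀ b : ℝ, ∑ k ∈ Finset.Icc 1 (K r - 1),
      w r k * (1 - ∏ k' ∈ Finset.Icc 1 k, (1 - setEntry x c i b (cont r) (path r k')))
      = (∑ k ∈ Finset.Icc 1 (pos r - 1),
          w r k * (1 - ∏ k' ∈ Finset.Icc 1 k, (1 - x c (path r k'))))
        + (w r (pos r) * (1 - (1 - b) * A)
          + ∑ k ∈ Finset.Icc (pos r + 1) (K r - 1),
            w r k * (1 - (1 - b) * (A * B k))) := by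
    intro b
    rw [sum_split_aux (pos r) (K r - 1) hp1 _ hp2]
    congr 1
    · refine Finset.sum_congr rfl fun k hk => ?_
      rw [Finset.mem_Icc] at hk
      congr 2
      refine Finset.prod_congr rfl fun k' hk' => ?_
      rw [Finset.mem_Icc] at hk'
      rw [hvalne b k' hk'.1 (by omega) (by omega)]
    congr 1
    · -- term at k = pos r
      rw [prod_split_aux (pos r) (pos r) hp1 _ le_rfl,
        show Finset.Icc (pos r + 1) (pos r) = ∅ from Finset.Icc_eq_empty (by omega),
        Finset.prod_empty, hvalp b, e1 b]
      ring_nf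
    · refine Finset.sum_congr rfl fun k hk => ?_
      rw [Finset.mem_Icc] at hk
      rw [prod_split_aux (pos r) k hp1 _ (by omega), hvalp b, e1 b, e2 b k hk.2]
      ring_nf
  rw [hS 1, hS 0, hlamEff, hwReq]
  have hdiff : (∑ k ∈ Finset.Icc (pos r + 1) (K r - 1), w r k * (1 - (1 - 1) * (A * B k)))
      - ∑ k ∈ Finset.Icc (pos r + 1) (K r - 1), w r k * (1 - (1 - 0) * (A * B k))
      = A * ∑ k ∈ Finset.Icc (pos r + 1) (K r - 1), w r k * B k := by
    rw [Finset.mul_sum, ← Finset.sum_sub_distrib]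
    exact Finset.sum_congr rfl fun k _ => by ring
  linear_combination lam r * hdiff
end

section
/- The set function g(A) = G(X_A) is submodular: for all A ⊆ B ⊆ E and e ∈ E \ B, g(A ∪ {e}) - g(A) ≥ g(B ∪ {e}) - g(B). -/
open Finset

/-- The cache decision `X_A` associated with a set `A` of (content, node) pairs. -/
def decisionOf {C N : Type*} [DecidableEq C] [DecidableEq N]
    (A : Finset (C × N)) : C → N → ℝ :=
  fun c i => if (c, i) ∈ A then 1 else 0

open scoped Classical in
lemma prod_decisionOf {C N : Type*} [DecidableEq C] [DecidableEq N]
    (S : Finset (C × N)) (c : C) (p : ℕ → N) (k : ℕ) :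
    ∏ k' ∈ Finset.Icc 1 k, (1 - decisionOf S c (p k')) =
      if ∀ k' ∈ Finset.Icc 1 k, (c, p k') ∉ S then (1:ℝ) else 0 := by
  have h : ∀ k' ∈ Finset.Icc 1 k,
      (1 - decisionOf S c (p k')) = if (c, p k') ∉ S then (1:ℝ) else 0 := by
    intro k' _
    simp only [decisionOf]
    split_ifs <;> simp_all
  rw [Finset.prod_congr rfl h, Finset.prod_boole]
  split_ifs <;> simp_all

open scoped Classical in
lemma core_ineq (pbe pb pae pa : Prop)
    (h1 : pae → pa) (h2 : pb → pa) (h3 : pb → pae → pbe) :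
    (1 - if pbe then (1:ℝ) else 0) - (1 - if pb then (1:ℝ) else 0) ≤
      (1 - if pae then (1:ℝ) else 0) - (1 - if pa then (1:ℝ) else 0) := by
  split_ifs <;> norm_num <;> tauto

/-- The set function `g(A) = G(X_A)` is submodular. -/
theorem stmt_3 {C N R : Type*} [DecidableEq C] [DecidableEq N] [Fintype R]
    (K : R → ℕ) (cont : R → C) (path : R → ℕ → N) (lam : R → ℝ) (w : R → ℕ → ℝ)
    (hlam : ∀ r, 0 ≤ lam r) (hw : ∀ r k, 0 ≤ w r k)
    (A B : Finset (C × N)) (hAB : A ⊆ B) (e : C × N) (he : e ∉ B) :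
    cachingGain K cont path lam w (decisionOf (insert e B)) -
        cachingGain K cont path lam w (decisionOf B) ≤
      cachingGain K cont path lam w (decisionOf (insert e A)) -
        cachingGain K cont path lam w (decisionOf A) := by
  classical
  unfold cachingGain
  rw [← Finset.sum_sub_distrib, ← Finset.sum_sub_distrib]
  refine Finset.sum_le_sum fun r _ => ?_
  rw [← mul_sub, ← mul_sub]
  refine mul_le_mul_of_nonneg_left ?_ (hlam r)
  rw [← Finset.sum_sub_distrib, ← Finset.sum_sub_distrib]
  refine Finset.sum_le_sum fun k _ => ?_
  rw [← mul_sub, ← mul_sub]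
  refine mul_le_mul_of_nonneg_left ?_ (hw r k)
  rw [prod_decisionOf, prod_decisionOf, prod_decisionOf, prod_decisionOf]
  refine core_ineq _ _ _ _ ?_ ?_ ?_
  · intro hpae k' hk
    exact fun hmem => hpae k' hk (Finset.mem_insert_of_mem hmem)
  · intro hpb k' hk hmem
    exact hpb k' hk (hAB hmem)
  · intro hpb hpae k' hk hmem
    rcases Finset.mem_insert.mp hmem with h | h
    · exact hpae k' hk (h ▸ Finset.mem_insert_self e A)
    · exact hpb k' hk h
end

section
/- For a monotone submodular function g : 2^E → ℝ with g(∅) = 0 and a matroid M = (E, I), the greedy algorithm that repeatedly adds the feasible element of maximum marginal gain produces a basis A with g(A) ≥ (1/2) · max_{B ∈ I} g(B). -/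
open Finset

private lemma aux_abel (δ c : ℕ → ℝ) (hnn : ∀ k, 0 ≤ δ k) (ha : ∀ k, δ (k+1) ≤ δ k)
    (hc : ∀ k, ∑ j ∈ Finset.range k, c j ≤ (k:ℝ)) (n : ℕ) :
    ∑ k ∈ Finset.range n, c k * δ k ≤ ∑ k ∈ Finset.range n, δ k := by
  have key : ∀ m, ∑ k ∈ Finset.range m, c k * δ k ≤
      ∑ k ∈ Finset.range m, δ k + (∑ k ∈ Finset.range m, c k - m) * δ m := by
    intro m
    induction m with
    | zero => simp
    | succ m ih =>
      have h2 := hc (m+1)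
      rw [Finset.sum_range_succ] at h2
      have h1 : (∑ k ∈ Finset.range m, c k + c m - (m+1)) * δ m ≤
          (∑ k ∈ Finset.range m, c k + c m - (m+1)) * δ (m+1) := by
        apply mul_le_mul_of_nonpos_left (ha m)
        push_cast at h2 ⊢
        linarith
      rw [Finset.sum_range_succ, Finset.sum_range_succ, Finset.sum_range_succ]
      push_cast
      nlinarith [ih, h1]
  have h3 : (∑ k ∈ Finset.range n, c k - n) * δ n ≤ 0 :=
    mul_nonpos_of_nonpos_of_nonneg (by linarith [hc n]) (hnn n)
  linarith [key n]

private lemma aux_union {E : Type*} [DecidableEq E] (g : Finset E → ℝ)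
    (hsub : ∀ A B : Finset E, A ⊆ B → ∀ e, e ∉ B →
      g (insert e B) - g B ≤ g (insert e A) - g A)
    (A : Finset E) :
    ∀ S : Finset E, g (A ∪ S) ≤ g A + ∑ b ∈ S \ A, (g (insert b A) - g A) := by
  intro S
  induction S using Finset.induction with
  | empty => simp
  | @insert x S hx ih =>
    by_cases hxA : x ∈ A
    · rw [Finset.union_insert, Finset.insert_eq_self.2 (Finset.mem_union_left _ hxA),
        Finset.insert_sdiff_of_mem _ hxA]
      exact ih
    · have hxS : x ∉ A ∪ S := by simp [hxA, hx]
      have h1 : g (insert x (A ∪ S)) - g (A ∪ S) ≤ g (insert x A) - g A :=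
        hsub A (A ∪ S) Finset.subset_union_left x hxS
      rw [Finset.union_insert, Finset.insert_sdiff_of_notMem _ hxA,
        Finset.sum_insert (by simp [hx])]
      linarith


/-- Greedy 1/2-approximation: for a monotone submodular `g` with `g ∅ = 0` and a
matroid `(E, I)`, the greedy algorithm (encoded by the list `l` of elements added,
in order) that repeatedly adds a feasible element of maximum marginal gain, until no
feasible element remains, yields a basis `A = l.toFinset` with
`g A ≥ (1/2) · g B` for every independent `B`. -/
theorem stmt_6 {E : Type*} [Fintype E] [DecidableEq E]
    (g : Finset E → ℝ) (I : Set (Finset E))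
    (hmono : ∀ A B : Finset E, A ⊆ B → g A ≤ g B)
    (hsub : ∀ A B : Finset E, A ⊆ B → ∀ e, e ∉ B →
      g (insert e B) - g B ≤ g (insert e A) - g A)
    (hempty : g ∅ = 0)
    (hIempty : (∅ : Finset E) ∈ I)
    (hIdown : ∀ A B : Finset E, A ⊆ B → B ∈ I → A ∈ I)
    (hIexch : ∀ A B : Finset E, A ∈ I → B ∈ I → A.card < B.card →
      ∃ e ∈ B, e ∉ A ∧ insert e A ∈ I)
    (l : List E) (hnd : l.Nodup)
    -- at each step, the chosen element is feasible and has maximum marginal gain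
    (hstep : ∀ k (hk : k < l.length),
      l.get ⟨k, hk⟩ ∉ (l.take k).toFinset ∧
      insert (l.get ⟨k, hk⟩) (l.take k).toFinset ∈ I ∧
      ∀ e, e ∉ (l.take k).toFinset → insert e (l.take k).toFinset ∈ I →
        g (insert e (l.take k).toFinset) - g (l.take k).toFinset ≤
          g (insert (l.get ⟨k, hk⟩) (l.take k).toFinset) - g (l.take k).toFinset)
    -- the algorithm stops when no feasible element remains: the output is a basis
    (hmax : ∀ e, e ∉ l.toFinset → insert e l.toFinset ∉ I) :
    ∀ B ∈ I, (1 / 2 : ℝ) * g B ≤ g l.toFinset := by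
  classical
  intro B hB
  set n := l.length with hn
  set P : ℕ → Finset E := fun k => (l.take k).toFinset with hP
  -- basic prefix facts
  have hPsub : ∀ {j k : ℕ}, j ≤ k → P j ⊆ P k := by
    intro j k h x hx
    simp only [hP, List.mem_toFinset] at *
    exact (List.take_subset _ _) (by rwa [List.take_take, Nat.min_eq_left h])
  have hPfull : ∀ {k : ℕ}, P k ⊆ l.toFinset := by
    intro k x hx
    simp only [hP, List.mem_toFinset] at *
    exact List.take_subset _ _ hx
  have hPn : P n = l.toFinset := by simp [hP, hn]
  have hP0 : P 0 = ∅ := by simp [hP]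
  have hPsucc : ∀ k (hk : k < n), P (k+1) = insert (l.get ⟨k, hk⟩) (P k) := by
    intro k hk
    simp only [hP]
    rw [List.take_succ, List.toFinset_append, List.getElem?_eq_getElem hk]
    simp
  have hPstop : ∀ {k : ℕ}, n ≤ k → P k = l.toFinset := by
    intro k h
    simp [hP, List.take_of_length_le (hn ▸ h)]
  have hPcard : ∀ k, k ≤ n → (P k).card = k := by
    intro k hk
    simp only [hP]
    rw [List.toFinset_card_of_nodup ((List.take_sublist _ _).nodup hnd)]
    simp [Nat.min_eq_left (hn ▸ hk)]
  have hPI : ∀ k, k ≤ n → P k ∈ I := by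
    intro k hk
    cases k with
    | zero => rw [hP0]; exact hIempty
    | succ m =>
      have hm : m < n := by omega
      rw [hPsucc m hm]
      exact (hstep m hm).2.1
  -- marginal gains
  set δ : ℕ → ℝ := fun k => g (P (k+1)) - g (P k) with hδ
  have hδnn : ∀ k, 0 ≤ δ k := by
    intro k
    have := hmono (P k) (P (k+1)) (hPsub (Nat.le_succ k))
    simp only [hδ]; linarith
  have hδant : ∀ k, δ (k+1) ≤ δ k := by
    intro k
    by_cases hk1 : k + 1 < n
    · have hk : k < n := by omega
      set e := l.get ⟨k+1, hk1⟩ with he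
      have he1 : e ∉ P (k+1) := (hstep (k+1) hk1).1
      have he0 : e ∉ P k := fun h => he1 (hPsub (Nat.le_succ k) h)
      have heI : insert e (P k) ∈ I := by
        apply hIdown _ (P (k+2)) _ (hPI (k+2) (by omega))
        rw [hPsucc (k+1) hk1]
        exact Finset.insert_subset_insert _ (hPsub (Nat.le_succ k))
      have h1 := (hstep k hk).2.2 e he0 heI
      have h2 := hsub (P k) (P (k+1)) (hPsub (Nat.le_succ k)) e he1
      have h3 : δ (k+1) = g (insert e (P (k+1))) - g (P (k+1)) := by
        simp only [hδ]; rw [hPsucc (k+1) hk1]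
      have h4 : δ k = g (insert (l.get ⟨k, hk⟩) (P k)) - g (P k) := by
        simp only [hδ]; rw [hPsucc k hk]
      rw [h3, h4]
      linarith
    · have : δ (k+1) = 0 := by
        simp only [hδ]
        rw [hPstop (by omega : n ≤ k+1), hPstop (by omega : n ≤ k+2)]
        ring
      rw [this]; exact hδnn k
  have htel : ∑ k ∈ Finset.range n, δ k = g l.toFinset := by
    simp only [hδ]
    rw [Finset.sum_range_sub (fun k => g (P k)), hPn, hP0, hempty, sub_zero]
  -- the threshold function t
  have hex : ∀ b ∈ B \ l.toFinset, ∃ k, insert b (P k) ∉ I := by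
    intro b hb
    exact ⟨n, by rw [hPn]; exact hmax b (Finset.mem_sdiff.1 hb).2⟩
  set t : E → ℕ := fun b =>
    if h : ∃ k, insert b (P k) ∉ I then Nat.find h - 1 else 0 with ht
  have hfind : ∀ b (hb : b ∈ B \ l.toFinset), 1 ≤ Nat.find (hex b hb) ∧
      Nat.find (hex b hb) ≤ n := by
    intro b hb
    constructor
    · by_contra h
      have h0 : Nat.find (hex b hb) = 0 := by omega
      have := Nat.find_spec (hex b hb)
      rw [h0, hP0] at this
      exact this (hIdown _ B (by
        intro x hx
        rcases Finset.mem_insert.1 hx with h | h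
        · rw [h]; exact (Finset.mem_sdiff.1 hb).1
        · simp at h) hB)
    · exact Nat.find_le (by rw [hPn]; exact hmax b (Finset.mem_sdiff.1 hb).2)
  have htval : ∀ b (hb : b ∈ B \ l.toFinset), t b = Nat.find (hex b hb) - 1 := by
    intro b hb
    simp only [ht]
    rw [dif_pos (hex b hb)]
  have ht3 : ∀ b ∈ B \ l.toFinset, t b < n := by
    intro b hb
    rw [htval b hb]
    have := hfind b hb
    omega
  have ht1 : ∀ b (hb : b ∈ B \ l.toFinset), insert b (P (t b)) ∈ I := by
    intro b hb
    rw [htval b hb]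
    by_contra h
    have := Nat.find_min (hex b hb) (m := Nat.find (hex b hb) - 1)
      (by have := hfind b hb; omega)
    exact this h
  have ht2 : ∀ b (hb : b ∈ B \ l.toFinset), insert b (P (t b + 1)) ∉ I := by
    intro b hb
    rw [htval b hb]
    have h1 : Nat.find (hex b hb) - 1 + 1 = Nat.find (hex b hb) := by
      have := hfind b hb; omega
    rw [h1]
    exact Nat.find_spec (hex b hb)
  -- bound each marginal of b by δ (t b)
  have hbound : ∀ b ∈ B \ l.toFinset,
      g (insert b l.toFinset) - g l.toFinset ≤ δ (t b) := by
    intro b hb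
    have hbA : b ∉ l.toFinset := (Finset.mem_sdiff.1 hb).2
    have h1 := hsub (P (t b)) l.toFinset hPfull b hbA
    have h2 := (hstep (t b) (ht3 b hb)).2.2 b (fun h => hbA (hPfull h)) (ht1 b hb)
    have h3 : δ (t b) = g (insert (l.get ⟨t b, ht3 b hb⟩) (P (t b))) - g (P (t b)) := by
      simp only [hδ]; rw [hPsucc (t b) (ht3 b hb)]
    rw [h3]
    linarith
  -- counting lemma
  have hcount : ∀ k : ℕ, ((B \ l.toFinset).filter (fun b => t b < k)).card ≤ k := by
    intro k
    set k' := min k n with hk'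
    have hkn : k' ≤ n := min_le_right _ _
    have hsubP : ∀ b ∈ (B \ l.toFinset).filter (fun b => t b < k),
        insert b (P k') ∉ I := by
      intro b hb
      obtain ⟨hbB, hbk⟩ := Finset.mem_filter.1 hb
      have h1 := ht2 b hbB
      have h2 : t b + 1 ≤ k' := by
        have := ht3 b hbB; omega
      intro h
      exact h1 (hIdown _ _ (Finset.insert_subset_insert _ (hPsub h2)) h)
    set D := ((B \ l.toFinset).filter (fun b => t b < k)) ∪ (B ∩ P k') with hD
    have hDB : D ⊆ B := by
      intro x hx
      rcases Finset.mem_union.1 hx with h | h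
      · exact (Finset.mem_sdiff.1 (Finset.mem_filter.1 h).1).1
      · exact (Finset.mem_inter.1 h).1
    have hDI : D ∈ I := hIdown _ B hDB hB
    have hDcard : D.card ≤ k' := by
      by_contra h
      push_neg at h
      obtain ⟨e, heD, heP, heI⟩ := hIexch (P k') D (hPI k' hkn) hDI
        (by rw [hPcard k' hkn]; exact h)
      rcases Finset.mem_union.1 heD with h' | h'
      · exact (hsubP e h') heI
      · exact heP (Finset.mem_inter.1 h').2
    calc ((B \ l.toFinset).filter (fun b => t b < k)).card
        ≤ D.card := Finset.card_le_card Finset.subset_union_left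
      _ ≤ k' := hDcard
      _ ≤ k := min_le_left _ _
  -- fibers
  set c : ℕ → ℝ := fun k =>
    (((B \ l.toFinset).filter (fun b => t b = k)).card : ℝ) with hc'
  have hfib : ∑ b ∈ B \ l.toFinset, δ (t b) = ∑ k ∈ Finset.range n, c k * δ k := by
    rw [← Finset.sum_fiberwise_of_maps_to
      (fun b hb => Finset.mem_range.2 (ht3 b hb)) (fun b => δ (t b))]
    apply Finset.sum_congr rfl
    intro k _
    rw [Finset.sum_congr rfl (fun b hb => by rw [(Finset.mem_filter.1 hb).2])]
    simp [hc', mul_comm]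
  have hcsum : ∀ k, ∑ j ∈ Finset.range k, c j ≤ (k : ℝ) := by
    intro k
    have h1 : ((B \ l.toFinset).filter (fun b => t b < k)).card =
        ∑ j ∈ Finset.range k, ((B \ l.toFinset).filter (fun b => t b = j)).card := by
      rw [Finset.card_eq_sum_card_fiberwise
        (f := t) (t := Finset.range k)
        (fun b hb => Finset.mem_range.2 (Finset.mem_filter.1 hb).2)]
      apply Finset.sum_congr rfl
      intro j hj
      congr 1
      rw [Finset.filter_filter]
      apply Finset.filter_congr
      intro b _
      have hjk := Finset.mem_range.1 hj
      constructor
      · rintro ⟨_, h⟩; exact h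
      · intro h; exact ⟨by omega, h⟩
    have h2 := hcount k
    simp only [hc']
    rw [← Nat.cast_sum, ← h1]
    exact_mod_cast h2
  have habel := aux_abel δ c hδnn hδant hcsum n
  -- put everything together
  have hunion := aux_union g hsub l.toFinset B
  have hgB : g B ≤ g (l.toFinset ∪ B) := hmono _ _ Finset.subset_union_right
  have hsum1 : ∑ b ∈ B \ l.toFinset, (g (insert b l.toFinset) - g l.toFinset) ≤
      ∑ b ∈ B \ l.toFinset, δ (t b) := Finset.sum_le_sum hbound
  rw [hfib] at hsum1
  rw [htel] at habel
  linarith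
end
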